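/- Let (u_n)_{n≥1} be a nonzero, non-decreasing sequence of real numbers satisfying u_{kn} = u_k · u_n for all k, n ≥ 1. Then there exists α ≥ 0 such that u_n = n^α for all n ≥ 1. -/

import Mathlib

/-- A nonzero, non-decreasing multiplicative sequence `(u_n)_{n ≥ 1}` equals
`(n^α)_{n ≥ 1}` for some `α ≥ 0`. -/
theorem multiplicative_monotone_sequence_eq_rpow (u : ℕ → ℝ)
    (hne : ∃ n, 1 ≤ n ∧ u n ≠ 0)
    (hmono : ∀ m n, 1 ≤ m → m ≤ n → u m ≤ u n)
    (hmul : ∀ k n, 1 ≤ k → 1 ≤ n → u (k * n) = u k * u n) :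
    ∃ α : ℝ, 0 ≤ α ∧ ∀ n, 1 ≤ n → u n = (n : ℝ) ^ α := by
  classical
  obtain ⟨n0, hn0, hun0⟩ := hne
  have h11 : u 1 = u 1 * u 1 := by simpa using hmul 1 1 le_rfl le_rfl
  have hu1ne : u 1 ≠ 0 := by
    intro h
    apply hun0
    have := hmul n0 1 hn0 le_rfl
    simpa [h] using this
  have h1 : u 1 = 1 := by
    have h : u 1 * (u 1 - 1) = 0 := by nlinarith [h11]
    rcases mul_eq_zero.mp h with h' | h'
    · exact absurd h' hu1ne
    · linarith
  have hpos : ∀ n, 1 ≤ n → 1 ≤ u n := fun n hn => h1 ▸ hmono 1 n le_rfl hn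
  have hupow : ∀ (n : ℕ), 1 ≤ n → ∀ k, u (n ^ k) = (u n) ^ k := by
    intro n hn k
    induction k with
    | zero => simpa using h1
    | succ k ih =>
      have hnk : 1 ≤ n ^ k := Nat.one_le_pow _ _ hn
      rw [pow_succ, pow_succ, hmul _ _ hnk hn, ih]
  by_cases hA : ∃ m, 2 ≤ m ∧ u m = 1
  · obtain ⟨m, hm, hum⟩ := hA
    refine ⟨0, le_rfl, fun n hn => ?_⟩
    rw [Real.rpow_zero]
    have hle : u n ≤ 1 := by
      have h2 : n ≤ m ^ n := le_of_lt (Nat.lt_pow_self (n := n) hm)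
      calc u n ≤ u (m ^ n) := hmono _ _ hn h2
        _ = (u m) ^ n := hupow m (by omega) n
        _ = 1 := by rw [hum, one_pow]
    exact le_antisymm hle (hpos n hn)
  · push_neg at hA
    have hgt : ∀ m, 2 ≤ m → 1 < u m := fun m hm =>
      lt_of_le_of_ne (hpos m (by omega)) (fun h => hA m hm h.symm)
    have hL2 : 0 < Real.log 2 := Real.log_pos (by norm_num)
    have hLu2 : 0 < Real.log (u 2) := Real.log_pos (hgt 2 le_rfl)
    set α := Real.log (u 2) / Real.log 2 with hαdef
    have hα : 0 < α := div_pos hLu2 hL2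
    have main : ∀ n, 2 ≤ n → Real.log (u n) = α * Real.log n := by
      intro n hn
      have hun : 1 < u n := hgt n hn
      have hLn : 0 < Real.log n := Real.log_pos (by exact_mod_cast by omega)
      set x := Real.log (u n) - α * Real.log n with hxdef
      have key : ∀ k : ℕ, 1 ≤ k → |x| ≤ Real.log (u 2) / k := by
        intro k hk
        set j := Nat.log 2 (n ^ k) with hjdef
        have hnk1 : 1 ≤ n ^ k := Nat.one_le_pow _ _ (by omega)
        have hjk1 : 2 ^ j ≤ n ^ k := Nat.pow_log_le_self 2 (by omega)
        have hjk2 : n ^ k < 2 ^ (j + 1) := Nat.lt_pow_succ_log_self (by norm_num) _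
        -- u inequalities
        have hA1 : (u 2) ^ j ≤ (u n) ^ k := by
          rw [← hupow 2 (by omega) j, ← hupow n (by omega) k]
          exact hmono _ _ (Nat.one_le_pow _ _ (by omega)) hjk1
        have hA2 : (u n) ^ k ≤ (u 2) ^ (j + 1) := by
          rw [← hupow 2 (by omega) (j + 1), ← hupow n (by omega) k]
          exact hmono _ _ hnk1 (le_of_lt hjk2)
        have hu2pos : 0 < u 2 := lt_trans one_pos (hgt 2 le_rfl)
        have hunpos : 0 < u n := lt_trans one_pos hun
        have lA1 : (j : ℝ) * Real.log (u 2) ≤ (k : ℝ) * Real.log (u n) := by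
          have := Real.log_le_log (by positivity) hA1
          rwa [Real.log_pow, Real.log_pow] at this
        have lA2 : (k : ℝ) * Real.log (u n) ≤ ((j : ℝ) + 1) * Real.log (u 2) := by
          have := Real.log_le_log (by positivity) hA2
          rw [Real.log_pow, Real.log_pow] at this
          exact_mod_cast this
        -- nat cast inequalities on logs
        have hjk1' : (2 : ℝ) ^ j ≤ (n : ℝ) ^ k := by exact_mod_cast hjk1
        have hjk2' : (n : ℝ) ^ k ≤ (2 : ℝ) ^ (j + 1) := by exact_mod_cast le_of_lt hjk2
        have lB1 : (j : ℝ) * Real.log 2 ≤ (k : ℝ) * Real.log n := by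
          have := Real.log_le_log (by positivity) hjk1'
          rwa [Real.log_pow, Real.log_pow] at this
        have lB2 : (k : ℝ) * Real.log n ≤ ((j : ℝ) + 1) * Real.log 2 := by
          have := Real.log_le_log (by positivity) hjk2'
          rw [Real.log_pow, Real.log_pow] at this
          exact_mod_cast this
        -- combine
        have hC1 : (j : ℝ) * Real.log (u 2) ≤ (k : ℝ) * (α * Real.log n) := by
          have h := mul_le_mul_of_nonneg_right lB1 (le_of_lt (div_pos hLu2 hL2))
          calc (j : ℝ) * Real.log (u 2)
              = (j : ℝ) * Real.log 2 * (Real.log (u 2) / Real.log 2) := by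
                field_simp
            _ ≤ (k : ℝ) * Real.log n * (Real.log (u 2) / Real.log 2) := h
            _ = (k : ℝ) * (α * Real.log n) := by rw [hαdef]; ring
        have hC2 : (k : ℝ) * (α * Real.log n) ≤ ((j : ℝ) + 1) * Real.log (u 2) := by
          have h := mul_le_mul_of_nonneg_right lB2 (le_of_lt (div_pos hLu2 hL2))
          calc (k : ℝ) * (α * Real.log n)
              = (k : ℝ) * Real.log n * (Real.log (u 2) / Real.log 2) := by rw [hαdef]; ring
            _ ≤ ((j : ℝ) + 1) * Real.log 2 * (Real.log (u 2) / Real.log 2) := h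
            _ = ((j : ℝ) + 1) * Real.log (u 2) := by
                field_simp
        have habs : |(k : ℝ) * x| ≤ Real.log (u 2) := by
          rw [hxdef]
          rw [abs_le]
          constructor
          · nlinarith
          · nlinarith
        have hkpos : (0 : ℝ) < k := by exact_mod_cast hk
        rw [le_div_iff₀ hkpos]
        calc |x| * k = |(k : ℝ) * x| := by
              rw [abs_mul, abs_of_pos hkpos, mul_comm]
          _ ≤ Real.log (u 2) := habs
      -- conclude x = 0
      have hx0 : x = 0 := by
        by_contra hx
        have hxpos : 0 < |x| := abs_pos.mpr hx
        obtain ⟨k, hkgt⟩ := exists_nat_gt (Real.log (u 2) / |x|)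
        have hk1 : 1 ≤ k := by
          by_contra h
          interval_cases k
          simp at hkgt
          nlinarith [div_pos hLu2 hxpos]
        have h2 := key k hk1
        have hkpos : (0 : ℝ) < k := by exact_mod_cast hk1
        have : Real.log (u 2) / k < |x| := by
          rw [div_lt_iff₀ hkpos]
          have h3 : Real.log (u 2) = (Real.log (u 2) / |x|) * |x| := by field_simp
          rw [h3, mul_comm |x| (k : ℝ)]
          exact mul_lt_mul_of_pos_right hkgt hxpos
        linarith
      rw [hxdef] at hx0
      linarith
    refine ⟨α, le_of_lt hα, fun n hn => ?_⟩
    rcases eq_or_lt_of_le hn with h | h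
    · rw [← h]
      simp [h1, Real.one_rpow]
    · have hn2 : 2 ≤ n := h
      have hunpos : 0 < u n := lt_trans one_pos (hgt n hn2)
      have hnpos : (0 : ℝ) < n := by exact_mod_cast by omega
      rw [Real.rpow_def_of_pos hnpos, mul_comm, ← main n hn2, Real.exp_log hunpos]
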